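/- arXiv:1210.7503 — 2 statements merged into one kernel-verified Lean document; each statement's English description precedes it below -/
import Mathlib

section
/- If X_1,...,X_n are drawn sequentially without replacement from a set of reals summing to 0, and a_1,...,a_n are random variables with each a_k measurable with respect to F_{k-1} = sigma(X_1,...,X_{k-1}), then the process M_k = W_k + ((a_1+...+a_k)/(n-k)) S_k, for 1 <= k <= n-1, is a martingale with respect to F_k, where W_k = a_1 X_1 + ... + a_k X_k and S_k = X_1+...+X_k. -/
open MeasureTheory Finset

noncomputable section

instance permMS (n : ℕ) : MeasurableSpace (Equiv.Perm (Fin n)) := ⊤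

instance permNE (n : ℕ) : Nonempty (Equiv.Perm (Fin n)) := ⟨1⟩

/-- uniform probability measure on the n! orderings: sampling without replacement. -/
def permMeasure (n : ℕ) : Measure (Equiv.Perm (Fin n)) :=
  (PMF.uniformOfFintype (Equiv.Perm (Fin n))).toMeasure

/-- `X n x i σ` : the `(i+1)`-st sample (0-based `i`) drawn without replacement. -/
def X (n : ℕ) (x : Fin n → ℝ) (i : ℕ) (σ : Equiv.Perm (Fin n)) : ℝ :=
  if h : i < n then x (σ ⟨i, h⟩) else 0

/-- partial sum `S_k = X_1 + ⋯ + X_k`. -/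
def S (n : ℕ) (x : Fin n → ℝ) (k : ℕ) (σ : Equiv.Perm (Fin n)) : ℝ :=
  ∑ i ∈ Finset.range k, X n x i σ

/-- partial sum of squares `T_k = X_1^2 + ⋯ + X_k^2`. -/
def T (n : ℕ) (x : Fin n → ℝ) (k : ℕ) (σ : Equiv.Perm (Fin n)) : ℝ :=
  ∑ i ∈ Finset.range k, (X n x i σ) ^ 2

/-- `F_k = σ(X_1, ..., X_k)`. -/
def F (n : ℕ) (x : Fin n → ℝ) (k : ℕ) : MeasurableSpace (Equiv.Perm (Fin n)) :=
  MeasurableSpace.comap (fun σ => fun i : Fin k => X n x i σ) inferInstance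

section helpers
variable {n : ℕ} {x : Fin n → ℝ}

instance permSC (n : ℕ) : MeasurableSingletonClass (Equiv.Perm (Fin n)) :=
  ⟨fun _ => MeasurableSpace.measurableSet_top⟩

lemma measurable_X_F {i k : ℕ} (hik : i < k) : Measurable[F n x k] (X n x i) := by
  have : X n x i = (fun v : Fin k → ℝ => v ⟨i, hik⟩) ∘
      (fun σ => fun j : Fin k => X n x j σ) := rfl
  rw [this]
  exact (measurable_pi_apply _).comp (fun t ht => ⟨t, ht, rfl⟩)

lemma F_mono {j k : ℕ} (h : j ≤ k) : F n x j ≤ F n x k := by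
  have : F n x j = ⨆ i : Fin j, MeasurableSpace.comap (X n x i) inferInstance := by
    rw [show F n x j = MeasurableSpace.comap (fun σ => fun i : Fin j => X n x i σ)
        MeasurableSpace.pi from rfl, MeasurableSpace.pi, MeasurableSpace.comap_iSup]
    simp_rw [MeasurableSpace.comap_comp, Function.comp_def]
  rw [this, iSup_le_iff]
  exact fun i => (measurable_X_F (i.2.trans_le h)).comap_le

lemma measurable_S_F {k : ℕ} : Measurable[F n x k] (S n x k) := by
  have : S n x k = fun σ => ∑ i ∈ Finset.range k, X n x i σ := rfl
  rw [this]
  exact Finset.measurable_sum _ (fun i hi => measurable_X_F (Finset.mem_range.mp hi))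

/-- a measurable function w.r.t. a comap σ-algebra is constant on fibers -/
lemma eq_of_comap {α β : Type*} [MeasurableSpace β] {f : α → β} {g : α → ℝ}
    (hg : Measurable[MeasurableSpace.comap f inferInstance] g) {σ σ' : α}
    (h : f σ = f σ') : g σ = g σ' := by
  obtain ⟨t, -, hpre⟩ := hg (measurableSet_singleton (g σ))
  have h1 : σ ∈ f ⁻¹' t := by rw [hpre]; exact rfl
  have h2 : σ' ∈ f ⁻¹' t := by simpa [Set.mem_preimage, h] using h1
  rw [hpre] at h2
  exact (Set.mem_singleton_iff.mp h2).symm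


/-- fibers over the next value are equinumerous -/
lemma fiber_card_eq {k : ℕ} (hkn : k < n) (v : Fin k → Fin n) {j j' : Fin n}
    (hj : ∀ i, v i ≠ j) (hj' : ∀ i, v i ≠ j') :
    (univ.filter (fun σ : Equiv.Perm (Fin n) =>
        (∀ i : Fin k, σ (Fin.castLE hkn.le i) = v i) ∧ σ ⟨k, hkn⟩ = j)).card =
    (univ.filter (fun σ : Equiv.Perm (Fin n) =>
        (∀ i : Fin k, σ (Fin.castLE hkn.le i) = v i) ∧ σ ⟨k, hkn⟩ = j')).card := by
  apply Finset.card_nbij' (fun σ => σ.trans (Equiv.swap j j'))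
    (fun σ => σ.trans (Equiv.swap j j'))
  · intro σ hσ
    simp only [Finset.mem_coe, mem_filter, mem_univ, true_and] at hσ ⊢
    refine ⟨fun i => ?_, ?_⟩
    · simp [Equiv.trans_apply, hσ.1 i, Equiv.swap_apply_of_ne_of_ne (hj i) (hj' i)]
    · simp [Equiv.trans_apply, hσ.2]
  · intro σ hσ
    simp only [Finset.mem_coe, mem_filter, mem_univ, true_and] at hσ ⊢
    refine ⟨fun i => ?_, ?_⟩
    · simp [Equiv.trans_apply, hσ.1 i, Equiv.swap_apply_of_ne_of_ne (hj i) (hj' i)]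
    · simp [Equiv.trans_apply, hσ.2]
  · intro σ hσ; ext i; simp [Equiv.trans_apply, Equiv.swap_apply_self]
  · intro σ hσ; ext i; simp [Equiv.trans_apply, Equiv.swap_apply_self]

lemma X_fib {k i : ℕ} (hkn : k ≤ n) (hik : i < k) {σ : Equiv.Perm (Fin n)}
    {v : Fin k → Fin n} (hσ : ∀ i : Fin k, σ (Fin.castLE hkn i) = v i) :
    X n x i σ = x (v ⟨i, hik⟩) := by
  have hin : i < n := lt_of_lt_of_le hik hkn
  rw [X, dif_pos hin, ← hσ ⟨i, hik⟩]
  rfl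

lemma S_fib {k : ℕ} (hkn : k ≤ n) {σ : Equiv.Perm (Fin n)}
    {v : Fin k → Fin n} (hσ : ∀ i : Fin k, σ (Fin.castLE hkn i) = v i) :
    S n x k σ = ∑ i : Fin k, x (v i) := by
  rw [S, ← Fin.sum_univ_eq_sum_range]
  exact Finset.sum_congr rfl (fun i _ => X_fib hkn i.2 hσ)

set_option maxHeartbeats 1000000 in
lemma fiber_sum (hx : ∑ i, x i = 0) {k : ℕ} (hkn : k < n) (v : Fin k → Fin n) :
    ∑ σ ∈ univ.filter (fun σ : Equiv.Perm (Fin n) =>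
        ∀ i : Fin k, σ (Fin.castLE hkn.le i) = v i),
      (((n : ℝ) - k) * X n x k σ + S n x k σ) = 0 := by
  classical
  set K : Fin n := ⟨k, hkn⟩ with hK
  set Fib := univ.filter (fun σ : Equiv.Perm (Fin n) =>
      ∀ i : Fin k, σ (Fin.castLE hkn.le i) = v i) with hFib
  rcases Fib.eq_empty_or_nonempty with hF | ⟨σ₀, hσ₀⟩
  · rw [hF, Finset.sum_empty]
  have hσ₀' : ∀ i : Fin k, σ₀ (Fin.castLE hkn.le i) = v i :=
    (Finset.mem_filter.mp hσ₀).2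
  have hvinj : Function.Injective v := by
    intro i i' h
    have h2 : σ₀ (Fin.castLE hkn.le i) = σ₀ (Fin.castLE hkn.le i') := by
      rw [hσ₀' i, hσ₀' i', h]
    have h3 := σ₀.injective h2
    have h4 : ((Fin.castLE hkn.le i) : ℕ) = ((Fin.castLE hkn.le i') : ℕ) := congrArg Fin.val h3
    exact Fin.ext h4
  set Sv := ∑ i : Fin k, x (v i) with hSv
  have hXK : ∀ σ : Equiv.Perm (Fin n), X n x k σ = x (σ K) := fun σ => by
    rw [X, dif_pos hkn]
  have hS : ∀ σ ∈ Fib, S n x k σ = Sv := by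
    intro σ hσ
    exact S_fib hkn.le (Finset.mem_filter.mp hσ).2
  -- counts
  set m : Fin n → ℕ := fun j => (Fib.filter (fun σ => σ K = j)).card with hm
  have hm_zero : ∀ i : Fin k, m (v i) = 0 := by
    intro i
    rw [hm]
    simp only [Finset.card_eq_zero]
    apply Finset.eq_empty_of_forall_notMem
    intro σ hσ
    obtain ⟨h1, h2⟩ := Finset.mem_filter.mp hσ
    have h3 : σ (Fin.castLE hkn.le i) = v i := (Finset.mem_filter.mp h1).2 i
    have h4 : Fin.castLE hkn.le i = K := σ.injective (h3.trans h2.symm)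
    have h5 : (i : ℕ) = k := congrArg Fin.val h4
    exact absurd h5 (Nat.ne_of_lt i.2)
  have hm_const : ∀ j j' : Fin n, (∀ i, v i ≠ j) → (∀ i, v i ≠ j') → m j = m j' := by
    intro j j' hj hj'
    rw [hm]
    simp only [hFib, Finset.filter_filter]
    exact fiber_card_eq hkn v hj hj'
  set Im := Finset.image v Finset.univ with hIm
  have hIm_card : Im.card = k := by
    rw [hIm, Finset.card_image_of_injective _ hvinj, Finset.card_univ, Fintype.card_fin]
  have hcompl_card : (Finset.univ \ Im).card = n - k := by
    rw [Finset.card_sdiff_of_subset (Finset.subset_univ _), Finset.card_univ, Fintype.card_fin, hIm_card]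
  have hcompl_ne : (Finset.univ \ Im).Nonempty := by
    rw [← Finset.card_pos, hcompl_card]
    omega
  obtain ⟨j₀, hj₀⟩ := hcompl_ne
  have hj₀' : ∀ i, v i ≠ j₀ := by
    intro i hvi
    apply (Finset.mem_sdiff.mp hj₀).2
    rw [← hvi]
    exact Finset.mem_image_of_mem v (Finset.mem_univ i)
  set M : ℝ := (m j₀ : ℝ) with hM
  have hsumX : ∑ σ ∈ Fib, X n x k σ = M * (-Sv) := by
    have e1 : ∑ σ ∈ Fib, X n x k σ = ∑ σ ∈ Fib, x (σ K) :=
      Finset.sum_congr rfl (fun σ _ => hXK σ)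
    have efib := Finset.sum_fiberwise_of_maps_to (s := Fib) (t := Finset.univ)
      (g := fun σ : Equiv.Perm (Fin n) => σ K) (fun σ _ => Finset.mem_univ (σ K))
      (fun σ : Equiv.Perm (Fin n) => x (σ K))
    rw [e1, ← efib]
    have e2 : ∀ j : Fin n, ∑ σ ∈ Fib.filter (fun σ => σ K = j), x (σ K) = (m j : ℝ) * x j := by
      intro j
      have e2' : ∀ σ ∈ Fib.filter (fun σ => σ K = j), x (σ K) = x j := fun σ hσ => by
        rw [(Finset.mem_filter.mp hσ).2]
      rw [Finset.sum_congr rfl e2', Finset.sum_const, nsmul_eq_mul]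
    rw [Finset.sum_congr rfl (fun j _ => e2 j), ← Finset.sum_sdiff (Finset.subset_univ Im)]
    have e3 : ∑ j ∈ Im, (m j : ℝ) * x j = 0 := by
      apply Finset.sum_eq_zero
      intro j hj
      obtain ⟨i, -, rfl⟩ := Finset.mem_image.mp hj
      rw [hm_zero i]
      simp
    have e4 : ∑ j ∈ Finset.univ \ Im, (m j : ℝ) * x j = M * ∑ j ∈ Finset.univ \ Im, x j := by
      rw [Finset.mul_sum]
      apply Finset.sum_congr rfl
      intro j hj
      have hvj : ∀ i, v i ≠ j := by
        intro i hvi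
        exact (Finset.mem_sdiff.mp hj).2 (hvi ▸ Finset.mem_image_of_mem v (Finset.mem_univ i))
      rw [hm_const j j₀ hvj hj₀']
    have eIm : ∑ j ∈ Im, x j = Sv := by
      rw [hIm, Finset.sum_image (fun i _ i' _ h => hvinj h)]
    have e5 : ∑ j ∈ Finset.univ \ Im, x j = -Sv := by
      have h6 := Finset.sum_sdiff (f := x) (Finset.subset_univ Im)
      rw [eIm, hx] at h6
      linarith
    rw [e3, e4, e5]
    ring
  have hcard : (Fib.card : ℝ) = ((n : ℝ) - k) * M := by
    have h := Finset.card_eq_sum_card_fiberwise (f := fun σ => σ K) (s := Fib)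
      (t := Finset.univ) (fun σ _ => Finset.mem_univ _)
    have h2 : Fib.card = ∑ j ∈ Finset.univ \ Im, m j := by
      rw [h, ← Finset.sum_sdiff (Finset.subset_univ Im)]
      have : ∑ j ∈ Im, m j = 0 := by
        apply Finset.sum_eq_zero
        intro j hj
        obtain ⟨i, -, rfl⟩ := Finset.mem_image.mp hj
        exact hm_zero i
      rw [this, add_zero]
    have h3 : ∑ j ∈ Finset.univ \ Im, m j = (n - k) * m j₀ := by
      rw [Finset.sum_congr rfl (fun j hj => by
        have hvj : ∀ i, v i ≠ j := by
          intro i hvi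
          exact (Finset.mem_sdiff.mp hj).2 (hvi ▸ Finset.mem_image_of_mem v (Finset.mem_univ i))
        exact hm_const j j₀ hvj hj₀')]
      rw [Finset.sum_const, hcompl_card, smul_eq_mul]
    rw [h2, h3, hM]
    push_cast [Nat.cast_sub hkn.le]
    ring
  have hsumS : ∑ σ ∈ Fib, S n x k σ = (Fib.card : ℝ) * Sv := by
    rw [Finset.sum_congr rfl hS, Finset.sum_const, nsmul_eq_mul]
  rw [Finset.sum_add_distrib, ← Finset.mul_sum, hsumX, hsumS, hcard]
  ring


lemma F_le_G {k : ℕ} (hkn : k ≤ n) :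
    F n x k ≤ MeasurableSpace.comap
      (fun σ : Equiv.Perm (Fin n) => fun i : Fin k => σ (Fin.castLE hkn i)) inferInstance := by
  have hco : (fun σ : Equiv.Perm (Fin n) => fun i : Fin k => X n x i σ)
      = (fun w : Fin k → Fin n => fun i : Fin k => x (w i)) ∘
        (fun σ : Equiv.Perm (Fin n) => fun i : Fin k => σ (Fin.castLE hkn i)) := by
    funext σ
    funext i
    simp only [Function.comp]
    rw [X, dif_pos (lt_of_lt_of_le i.2 hkn)]
    rfl
  rw [show F n x k = MeasurableSpace.comap
      (fun σ : Equiv.Perm (Fin n) => fun i : Fin k => X n x i σ) inferInstance from rfl, hco,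
    ← MeasurableSpace.comap_comp]
  exact MeasurableSpace.comap_mono (measurable_of_countable _).comap_le

end helpers

theorem statement4 (n : ℕ) (x : Fin n → ℝ) (hx : ∑ i, x i = 0)
    (a : ℕ → Equiv.Perm (Fin n) → ℝ)
    (ha : ∀ i, i < n → Measurable[F n x i] (a i))
    (Mart : ℕ → Equiv.Perm (Fin n) → ℝ)
    (hMart : ∀ k σ, Mart k σ =
      (∑ i ∈ Finset.range k, a i σ * X n x i σ)
        + ((∑ i ∈ Finset.range k, a i σ) / ((n : ℝ) - k)) * S n x k σ) :
    (∀ k, 1 ≤ k → k ≤ n - 1 → StronglyMeasurable[F n x k] (Mart k)) ∧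
    (∀ k, 1 ≤ k → k + 1 ≤ n - 1 →
      (permMeasure n)[Mart (k + 1)|F n x k] =ᵐ[permMeasure n] Mart k) := by
  classical
  have hMeas : ∀ k, k < n → Measurable[F n x k] (Mart k) := by
    intro k hkn
    have hMk : Mart k = fun σ => (∑ i ∈ Finset.range k, a i σ * X n x i σ)
        + ((∑ i ∈ Finset.range k, a i σ) / ((n : ℝ) - k)) * S n x k σ := funext (hMart k)
    rw [hMk]
    have hA : Measurable[F n x k] (fun σ => ∑ i ∈ Finset.range k, a i σ) :=
      Finset.measurable_sum _ (fun i hi =>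
        ((ha i (lt_trans (Finset.mem_range.mp hi) hkn)).mono
          (F_mono (le_of_lt (Finset.mem_range.mp hi))) le_rfl))
    exact (Finset.measurable_sum _ (fun i hi =>
        (((ha i (lt_trans (Finset.mem_range.mp hi) hkn)).mono
          (F_mono (le_of_lt (Finset.mem_range.mp hi))) le_rfl)).mul
          (measurable_X_F (Finset.mem_range.mp hi)))).add
      ((hA.div_const _).mul measurable_S_F)
  refine ⟨fun k hk1 hk2 => (hMeas k (by omega)).stronglyMeasurable, fun k hk1 hk2 => ?_⟩
  have hkn : k + 1 < n := by omega
  have hkn' : k < n := by omega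
  have hd1 : ((n : ℝ) - k) ≠ 0 := by
    have : (k : ℝ) < n := by exact_mod_cast hkn'
    linarith
  have hd2 : ((n : ℝ) - (k + 1)) ≠ 0 := by
    have : ((k : ℝ) + 1) < n := by exact_mod_cast hkn
    linarith
  set μ := permMeasure n with hμ
  haveI : IsProbabilityMeasure μ := PMF.toMeasure.isProbabilityMeasure _
  have hm : F n x k ≤ permMS n := le_top
  haveI : SigmaFinite (μ.trim hm) := inferInstance
  -- the F_k-measurable coefficient
  set c : Equiv.Perm (Fin n) → ℝ := fun σ =>
    a k σ + (∑ i ∈ Finset.range (k + 1), a i σ) / ((n : ℝ) - (k + 1)) with hc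
  have hc_meas : Measurable[F n x k] c := by
    have hA : Measurable[F n x k] (fun σ => ∑ i ∈ Finset.range (k + 1), a i σ) := by
      apply Finset.measurable_sum
      intro i hi
      have hik : i < k + 1 := Finset.mem_range.mp hi
      exact (ha i (by omega)).mono (F_mono (by omega)) le_rfl
    exact ((ha k hkn').mono (F_mono le_rfl) le_rfl).add (hA.div_const _)
  -- algebraic identity
  have hdiff : ∀ σ, Mart (k + 1) σ - Mart k σ
      = c σ * (X n x k σ + S n x k σ / ((n : ℝ) - k)) := by
    intro σ
    rw [hMart, hMart, hc]
    have hS1 : S n x (k + 1) σ = S n x k σ + X n x k σ := by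
      rw [S, S, Finset.sum_range_succ]
    simp only [Finset.sum_range_succ, hS1]
    push_cast
    field_simp
    ring
  -- the map recording the first k positions
  set ψ : Equiv.Perm (Fin n) → (Fin k → Fin n) :=
    fun σ => fun i : Fin k => σ (Fin.castLE hkn'.le i) with hψ
  have hG : F n x k ≤ MeasurableSpace.comap ψ inferInstance := F_le_G hkn'.le
  have hc_G : Measurable[MeasurableSpace.comap ψ inferInstance] c := hc_meas.mono hG le_rfl
  -- per-fiber vanishing
  have hfib0 : ∀ w : Fin k → Fin n,
      ∑ σ ∈ Finset.univ.filter (fun σ : Equiv.Perm (Fin n) => ψ σ = w),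
        (Mart (k + 1) σ - Mart k σ) = 0 := by
    intro w
    set Fib := Finset.univ.filter (fun σ : Equiv.Perm (Fin n) => ψ σ = w) with hFibdef
    have hFibeq : Fib = Finset.univ.filter
        (fun σ : Equiv.Perm (Fin n) => ∀ i : Fin k, σ (Fin.castLE hkn'.le i) = w i) := by
      apply Finset.filter_congr
      intro σ _
      rw [hψ]
      exact funext_iff
    rcases Fib.eq_empty_or_nonempty with hF | ⟨σ₁, hσ₁⟩
    · rw [hF, Finset.sum_empty]
    have hcconst : ∀ σ ∈ Fib, c σ = c σ₁ := by
      intro σ hσ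
      exact eq_of_comap hc_G
        (((Finset.mem_filter.mp hσ).2).trans ((Finset.mem_filter.mp hσ₁).2).symm)
    calc ∑ σ ∈ Fib, (Mart (k + 1) σ - Mart k σ)
        = ∑ σ ∈ Fib, c σ₁ * ((((n : ℝ) - k) * X n x k σ + S n x k σ) / ((n : ℝ) - k)) := by
          apply Finset.sum_congr rfl
          intro σ hσ
          rw [hdiff σ, hcconst σ hσ]
          congr 1
          field_simp
      _ = (c σ₁ / ((n : ℝ) - k)) *
            ∑ σ ∈ Fib, (((n : ℝ) - k) * X n x k σ + S n x k σ) := by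
          rw [Finset.mul_sum]
          apply Finset.sum_congr rfl
          intro σ _
          ring
      _ = 0 := by
          rw [hFibeq, fiber_sum hx hkn' w, mul_zero]
  -- conclude via uniqueness of conditional expectation
  symm
  refine ae_eq_condExp_of_forall_setIntegral_eq hm (Integrable.of_finite)
    (fun s _ _ => (Integrable.of_finite).integrableOn) (fun s hs _ => ?_)
    (StronglyMeasurable.aestronglyMeasurable (hMeas k hkn').stronglyMeasurable)
  obtain ⟨t, -, htpre⟩ := hG s hs
  have hset : MeasurableSet s := MeasurableSpace.measurableSet_top
  -- reduce set integrals to finite sums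
  have hw : ∀ σ : Equiv.Perm (Fin n),
      (μ {σ}).toReal = ((Fintype.card (Equiv.Perm (Fin n)) : ℝ))⁻¹ := by
    intro σ
    rw [hμ, permMeasure, PMF.toMeasure_apply_singleton _ _ (measurableSet_singleton σ),
      PMF.uniformOfFintype_apply]
    simp
  have hint_eq : ∀ g : Equiv.Perm (Fin n) → ℝ, ∫ σ in s, g σ ∂μ
      = ((Fintype.card (Equiv.Perm (Fin n)) : ℝ))⁻¹ *
        ∑ σ ∈ Finset.univ.filter (fun σ => σ ∈ s), g σ := by
    intro g
    rw [← integral_indicator hset, integral_fintype (Integrable.of_finite)]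
    simp_rw [measureReal_def, hw, smul_eq_mul]
    rw [← Finset.mul_sum]
    congr 1
    have := Finset.sum_indicator_eq_sum_filter Finset.univ (fun _ => g)
      (fun _ => s) (id : Equiv.Perm (Fin n) → Equiv.Perm (Fin n))
    simpa using this
  rw [hint_eq, hint_eq]
  congr 1
  -- sums over an F_k-measurable set agree
  have hfilter : Finset.univ.filter (fun σ : Equiv.Perm (Fin n) => σ ∈ s)
      = Finset.univ.filter (fun σ => ψ σ ∈ t) := by
    apply Finset.filter_congr
    intro σ _
    rw [← htpre]
    exact Iff.rfl
  rw [hfilter, ← sub_eq_zero, ← Finset.sum_sub_distrib]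
  have hmap := Finset.sum_fiberwise_of_maps_to
    (s := Finset.univ.filter (fun σ : Equiv.Perm (Fin n) => ψ σ ∈ t))
    (t := (Finset.univ : Finset (Fin k → Fin n))) (g := ψ)
    (fun σ _ => Finset.mem_univ _) (fun σ => Mart k σ - Mart (k + 1) σ)
  rw [← hmap]
  apply Finset.sum_eq_zero
  intro w _
  by_cases hwt : w ∈ t
  · have heq : (Finset.univ.filter (fun σ : Equiv.Perm (Fin n) => ψ σ ∈ t)).filter
        (fun σ => ψ σ = w) = Finset.univ.filter (fun σ : Equiv.Perm (Fin n) => ψ σ = w) := by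
      rw [Finset.filter_filter]
      apply Finset.filter_congr
      intro σ _
      constructor
      · exact fun h => h.2
      · exact fun h => ⟨h ▸ hwt, h⟩
    rw [heq, ← neg_eq_zero, ← Finset.sum_neg_distrib]
    rw [← hfib0 w]
    apply Finset.sum_congr rfl
    intro σ _
    ring
  · have heq : (Finset.univ.filter (fun σ : Equiv.Perm (Fin n) => ψ σ ∈ t)).filter
        (fun σ => ψ σ = w) = ∅ := by
      apply Finset.eq_empty_of_forall_notMem
      intro σ hσ
      obtain ⟨h1, h2⟩ := Finset.mem_filter.mp hσ
      exact hwt (h2 ▸ (Finset.mem_filter.mp h1).2)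
    rw [heq, Finset.sum_empty]

end
end

section
/- If X_1,...,X_n are drawn sequentially without replacement from a set of reals summing to 0, then the process M_k = X_1 X_2 + X_2 X_3 + ... + X_{k-1} X_k + (X_1+...+X_{k-1})(X_1+...+X_k)/(n-k), for 2 <= k <= n-1, is a martingale with respect to F_k = sigma(X_1,...,X_k). -/
open MeasureTheory Finset

noncomputable section

instance permMSC (n : ℕ) : MeasurableSingletonClass (Equiv.Perm (Fin n)) :=
  ⟨fun _ => trivial⟩

instance permProb (n : ℕ) : IsProbabilityMeasure (permMeasure n) := by
  unfold permMeasure; infer_instance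

lemma X_eq (n : ℕ) (x : Fin n → ℝ) {j : ℕ} (hjn : j < n) (σ : Equiv.Perm (Fin n)) :
    X n x j σ = x (σ ⟨j, hjn⟩) := dif_pos hjn

lemma X_comp (n : ℕ) (x : Fin n → ℝ) (k i : ℕ) (hi : i < k) (σ π : Equiv.Perm (Fin n))
    (hπ : ∀ m : Fin n, (m : ℕ) < k → π m = m) : X n x i (σ * π) = X n x i σ := by
  unfold X
  split_ifs with h
  · rw [Equiv.Perm.mul_apply, hπ ⟨i, h⟩ hi]
  · rfl

lemma S_comp (n : ℕ) (x : Fin n → ℝ) (k m : ℕ) (hm : m ≤ k) (σ π : Equiv.Perm (Fin n))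
    (hπ : ∀ m : Fin n, (m : ℕ) < k → π m = m) : S n x m (σ * π) = S n x m σ := by
  unfold S
  refine Finset.sum_congr rfl fun i hi => ?_
  exact X_comp n x k i (lt_of_lt_of_le (Finset.mem_range.1 hi) hm) σ π hπ

/-- Key exchangeability lemma. -/
lemma key (n : ℕ) (x : Fin n → ℝ) (hx : ∑ i, x i = 0) (k : ℕ) (hk : k < n)
    (f : Equiv.Perm (Fin n) → ℝ)
    (hf : ∀ (σ : Equiv.Perm (Fin n)) (j : ℕ) (hj : k ≤ j) (hjn : j < n),
      f (σ * Equiv.swap ⟨k, hk⟩ ⟨j, hjn⟩) = f σ) :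
    ((n : ℝ) - k) * ∑ σ : Equiv.Perm (Fin n), f σ * X n x k σ
      = - ∑ σ : Equiv.Perm (Fin n), f σ * S n x k σ := by
  have step1 : ∀ (j : ℕ), k ≤ j → ∀ (hjn : j < n),
      (∑ σ : Equiv.Perm (Fin n), f σ * X n x j σ)
        = ∑ σ : Equiv.Perm (Fin n), f σ * X n x k σ := by
    intro j hj hjn
    rw [← Equiv.sum_comp (Equiv.mulRight (Equiv.swap (⟨k, hk⟩ : Fin n) ⟨j, hjn⟩))
      (fun σ => f σ * X n x j σ)]
    refine Finset.sum_congr rfl fun σ _ => ?_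
    simp only [Equiv.coe_mulRight]
    rw [hf σ j hj hjn, X_eq n x hjn, X_eq n x hk]
    congr 1
    rw [Equiv.Perm.mul_apply, Equiv.swap_apply_right]
  have htot : ∀ σ : Equiv.Perm (Fin n), ∑ i ∈ Finset.range n, X n x i σ = 0 := by
    intro σ
    rw [← Fin.sum_univ_eq_sum_range (fun i => X n x i σ) n]
    rw [← hx, ← Equiv.sum_comp σ x]
    refine Finset.sum_congr rfl fun i _ => ?_
    rw [X_eq n x i.2 σ]
  have main : ∑ j ∈ Finset.Ico k n, (∑ σ : Equiv.Perm (Fin n), f σ * X n x j σ)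
      = (n - k) • (∑ σ : Equiv.Perm (Fin n), f σ * X n x k σ) := by
    rw [Finset.sum_congr rfl fun j hj =>
      step1 j (Finset.mem_Ico.1 hj).1 (Finset.mem_Ico.1 hj).2, Finset.sum_const, Nat.card_Ico]
  have main2 : ∑ j ∈ Finset.Ico k n, (∑ σ : Equiv.Perm (Fin n), f σ * X n x j σ)
      = ∑ σ : Equiv.Perm (Fin n), f σ * (- S n x k σ) := by
    rw [Finset.sum_comm]
    refine Finset.sum_congr rfl fun σ _ => ?_
    rw [← Finset.mul_sum]
    congr 1
    have h1 := Finset.sum_Ico_consecutive (fun i => X n x i σ) (Nat.zero_le k) hk.le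
    have h0 := htot σ
    have hS : S n x k σ = ∑ i ∈ Finset.Ico 0 k, X n x i σ := by
      rw [Nat.Ico_zero_eq_range]; rfl
    have h0' : ∑ i ∈ Finset.Ico 0 n, X n x i σ = 0 := by
      rw [Nat.Ico_zero_eq_range]; exact h0
    rw [hS]
    linarith
  calc ((n : ℝ) - k) * ∑ σ : Equiv.Perm (Fin n), f σ * X n x k σ
      = ((n - k : ℕ) : ℝ) * ∑ σ : Equiv.Perm (Fin n), f σ * X n x k σ := by
        rw [Nat.cast_sub hk.le]
    _ = (n - k) • (∑ σ : Equiv.Perm (Fin n), f σ * X n x k σ) := (nsmul_eq_mul _ _).symm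
    _ = ∑ σ : Equiv.Perm (Fin n), f σ * (- S n x k σ) := by rw [← main, main2]
    _ = - ∑ σ : Equiv.Perm (Fin n), f σ * S n x k σ := by
        simp [mul_neg]

theorem statement5 (n : ℕ) (x : Fin n → ℝ) (hx : ∑ i, x i = 0)
    (Mart : ℕ → Equiv.Perm (Fin n) → ℝ)
    (hMart : ∀ k σ, Mart k σ =
      (∑ i ∈ Finset.range (k - 1), X n x i σ * X n x (i + 1) σ)
        + S n x (k - 1) σ * S n x k σ / ((n : ℝ) - k)) :
    (∀ k, 2 ≤ k → k ≤ n - 1 → StronglyMeasurable[F n x k] (Mart k)) ∧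
    (∀ k, 2 ≤ k → k + 1 ≤ n - 1 →
      (permMeasure n)[Mart (k + 1)|F n x k] =ᵐ[permMeasure n] Mart k) := by
  have meas : ∀ k, 2 ≤ k → k ≤ n - 1 → StronglyMeasurable[F n x k] (Mart k) := by
    intro k hk2 hk1
    -- Mart k factors through the first k coordinates
    set φ : (Fin k → ℝ) → ℝ := fun y =>
      (∑ i ∈ Finset.range (k - 1),
          (if h : i < k then y ⟨i, h⟩ else 0) * (if h : i + 1 < k then y ⟨i + 1, h⟩ else 0))
        + (∑ i ∈ Finset.range (k - 1), if h : i < k then y ⟨i, h⟩ else 0)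
          * (∑ i ∈ Finset.range k, if h : i < k then y ⟨i, h⟩ else 0) / ((n : ℝ) - k) with hφ
    have hmy : ∀ i : ℕ, Measurable fun y : Fin k → ℝ => if h : i < k then y ⟨i, h⟩ else 0 := by
      intro i
      by_cases h : i < k
      · simp only [dif_pos h]; exact measurable_pi_apply _
      · simp only [dif_neg h]; exact measurable_const
    have hφm : Measurable φ := by
      apply Measurable.add
      · exact Finset.measurable_sum _ fun i _ => (hmy i).mul (hmy (i + 1))
      · exact ((Finset.measurable_sum _ fun i _ => hmy i).mul
          (Finset.measurable_sum _ fun i _ => hmy i)).div_const _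
    have happ : ∀ σ, (φ ∘ fun σ => fun i : Fin k => X n x i σ) σ
        = (∑ i ∈ Finset.range (k - 1),
            (if h : i < k then X n x i σ else 0) * (if h : i + 1 < k then X n x (i + 1) σ else 0))
          + (∑ i ∈ Finset.range (k - 1), if h : i < k then X n x i σ else 0)
            * (∑ i ∈ Finset.range k, if h : i < k then X n x i σ else 0) / ((n : ℝ) - k) :=
      fun σ => rfl
    have hcomp : (φ ∘ fun σ => fun i : Fin k => X n x i σ) = Mart k := by
      funext σ
      rw [happ σ, hMart k σ]
      congr 1
      · refine Finset.sum_congr rfl fun i hi => ?_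
        have h' := Finset.mem_range.1 hi
        rw [dif_pos (by omega : i < k), dif_pos (by omega : i + 1 < k)]
      · have e1 : (∑ i ∈ Finset.range (k - 1), if h : i < k then X n x i σ else 0)
            = S n x (k - 1) σ :=
          Finset.sum_congr rfl fun i hi => dif_pos (by have := Finset.mem_range.1 hi; omega)
        have e2 : (∑ i ∈ Finset.range k, if h : i < k then X n x i σ else 0) = S n x k σ :=
          Finset.sum_congr rfl fun i hi => dif_pos (Finset.mem_range.1 hi)
        rw [e1, e2]
    rw [← hcomp]
    exact (hφm.comp (Measurable.of_comap_le le_rfl)).stronglyMeasurable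
  refine ⟨meas, ?_⟩
  intro k hk2 hk1
  classical
  have hkn : k + 2 ≤ n := by omega
  have hkltn : k < n := by omega
  have hk1n : k - 1 < n := by omega
  set μ := permMeasure n with hμ
  have hm : F n x k ≤ (permMS n) := le_top
  have hsm : StronglyMeasurable[F n x k] (Mart k) := meas k hk2 (by omega)
  have ha0 : ((n : ℝ) - (k + 1)) ≠ 0 := by
    have : ((k:ℝ) + 1) < (n : ℝ) := by exact_mod_cast (by omega : k + 1 < n)
    linarith
  have hb0 : ((n : ℝ) - k) ≠ 0 := by
    have : ((k:ℝ)) < (n : ℝ) := by exact_mod_cast hkltn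
    linarith
  refine (ae_eq_condExp_of_forall_setIntegral_eq hm (Integrable.of_finite)
    (fun s _ _ => (Integrable.of_finite).integrableOn) ?_
    hsm.aestronglyMeasurable).symm
  intro s hs _
  -- reduce set integrals to finite sums
  have hint : ∀ g : Equiv.Perm (Fin n) → ℝ,
      ∫ σ in s, g σ ∂μ = ((Fintype.card (Equiv.Perm (Fin n)) : ℝ))⁻¹
        * ∑ σ : Equiv.Perm (Fin n), (if σ ∈ s then (1:ℝ) else 0) * g σ := by
    intro g
    rw [← integral_indicator MeasurableSpace.measurableSet_top,
      integral_fintype (Integrable.of_finite), Finset.mul_sum]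
    refine Finset.sum_congr rfl fun σ _ => ?_
    have hμσ : μ {σ} = (Fintype.card (Equiv.Perm (Fin n)) : ENNReal)⁻¹ := by
      rw [hμ, permMeasure, PMF.toMeasure_apply_singleton _ _ (measurableSet_singleton σ),
        PMF.uniformOfFintype_apply]
    rw [measureReal_def, hμσ, Set.indicator_apply, smul_eq_mul]
    rw [ENNReal.toReal_inv, ENNReal.toReal_natCast]
    by_cases h : σ ∈ s <;> simp [h]
  -- the combinatorial core
  set w : Equiv.Perm (Fin n) → ℝ := fun σ => if σ ∈ s then (1:ℝ) else 0 with hw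
  set f : Equiv.Perm (Fin n) → ℝ :=
    fun σ => w σ * (X n x (k - 1) σ + S n x k σ / ((n : ℝ) - (k + 1))) with hf
  -- invariance of w, hence of f, under swaps of positions ≥ k
  have hπfix : ∀ (j : ℕ) (hj : k ≤ j) (hjn : j < n) (m : Fin n), (m : ℕ) < k →
      Equiv.swap (⟨k, hkltn⟩ : Fin n) ⟨j, hjn⟩ m = m := by
    intro j hj hjn m hm'
    apply Equiv.swap_apply_of_ne_of_ne
    · refine Fin.ne_of_val_ne ?_
      simp only [Fin.val_mk]; omega
    · refine Fin.ne_of_val_ne ?_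
      simp only [Fin.val_mk]; omega
  have hwinv : ∀ (σ : Equiv.Perm (Fin n)) (π : Equiv.Perm (Fin n)),
      (∀ m : Fin n, (m : ℕ) < k → π m = m) → w (σ * π) = w σ := by
    intro σ π hπ
    obtain ⟨A, -, rfl⟩ := hs
    have : (fun i : Fin k => X n x i (σ * π)) = (fun i : Fin k => X n x i σ) := by
      funext i
      exact X_comp n x k i i.2 σ π hπ
    simp only [hw, Set.mem_preimage, this]
  have hfinv : ∀ (σ : Equiv.Perm (Fin n)) (j : ℕ) (hj : k ≤ j) (hjn : j < n),
      f (σ * Equiv.swap ⟨k, hkltn⟩ ⟨j, hjn⟩) = f σ := by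
    intro σ j hj hjn
    have hπ := hπfix j hj hjn
    rw [hf]
    simp only
    rw [hwinv σ _ hπ, X_comp n x k (k - 1) (by omega) σ _ hπ, S_comp n x k k le_rfl σ _ hπ]
  have hkey := key n x hx k hkltn f hfinv
  -- pointwise expansion
  have hpt : ∀ σ : Equiv.Perm (Fin n),
      w σ * Mart (k + 1) σ
        = (f σ * X n x k σ + f σ * S n x k σ / ((n : ℝ) - k)) + w σ * Mart k σ := by
    intro σ
    rw [hMart (k + 1) σ, hMart k σ, hf]
    simp only
    have e1 : k + 1 - 1 = k := rfl
    rw [e1]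
    have e2 : ∑ i ∈ Finset.range k, X n x i σ * X n x (i + 1) σ
        = (∑ i ∈ Finset.range (k - 1), X n x i σ * X n x (i + 1) σ)
          + X n x (k - 1) σ * X n x k σ := by
      have : k = (k - 1) + 1 := by omega
      rw [this, Finset.sum_range_succ]
      congr 2 <;> omega
    have e3 : S n x (k + 1) σ = S n x k σ + X n x k σ := Finset.sum_range_succ _ k
    have e4 : S n x k σ = S n x (k - 1) σ + X n x (k - 1) σ := by
      have : k = (k - 1) + 1 := by omega
      conv_lhs => rw [this]
      exact Finset.sum_range_succ _ (k - 1)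
    rw [e2, e3]
    have hc : ((k + 1 : ℕ) : ℝ) = (k : ℝ) + 1 := by push_cast; ring
    rw [hc]
    set A := ∑ i ∈ Finset.range (k - 1), X n x i σ * X n x (i + 1) σ
    set P := S n x (k - 1) σ
    set Q := X n x (k - 1) σ
    set R := X n x k σ
    rw [e4]
    have hb1 : (n : ℝ) - k = ((n : ℝ) - ((k : ℝ) + 1)) + 1 := by ring
    field_simp
    ring
  have core : ∑ σ : Equiv.Perm (Fin n), w σ * Mart (k + 1) σ
      = ∑ σ : Equiv.Perm (Fin n), w σ * Mart k σ :=
    calc ∑ σ : Equiv.Perm (Fin n), w σ * Mart (k + 1) σ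
        = ∑ σ : Equiv.Perm (Fin n),
            ((f σ * X n x k σ + f σ * S n x k σ / ((n : ℝ) - k)) + w σ * Mart k σ) :=
          Finset.sum_congr rfl fun σ _ => hpt σ
      _ = ((∑ σ : Equiv.Perm (Fin n), f σ * X n x k σ)
            + (∑ σ : Equiv.Perm (Fin n), f σ * S n x k σ) / ((n : ℝ) - k))
          + ∑ σ : Equiv.Perm (Fin n), w σ * Mart k σ := by
          rw [Finset.sum_add_distrib, Finset.sum_add_distrib, ← Finset.sum_div]
      _ = ∑ σ : Equiv.Perm (Fin n), w σ * Mart k σ := by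
          have : (∑ σ : Equiv.Perm (Fin n), f σ * X n x k σ)
              = - (∑ σ : Equiv.Perm (Fin n), f σ * S n x k σ) / ((n : ℝ) - k) := by
            field_simp
            linarith [hkey]
          rw [this]
          field_simp
          ring

  rw [hint, hint]
  congr 1
  exact core.symm

end
end
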